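/- With Y = X ∪ {p} topologized as in the one-point connectification construction (opens are: open sets of X, together with sets U containing p with U ∩ X open in X and U containing an element of D(C) for each component C), the subspace topology that Y induces on X coincides with the original topology of X. -/

import Mathlib

open Set

/-- A collection of sets has the finite intersection property if every finite
subcollection has nonempty intersection. -/
def FIP {α : Type*} (D : Set (Set α)) : Prop :=
  ∀ F ⊆ D, F.Finite → (⋂₀ F).Nonempty

/-- `D` is a maximal collection of closed subsets of `C` with the finite
intersection property and empty intersection. -/
def IsMaxFIPFamily {X : Type*} [TopologicalSpace X] (C : Set X) (D : Set (Set X)) : Prop :=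
  (∀ A ∈ D, IsClosed A ∧ A ⊆ C) ∧ FIP D ∧ ⋂₀ D = ∅ ∧
    ∀ D' : Set (Set X), (∀ A ∈ D', IsClosed A ∧ A ⊆ C) → FIP D' → ⋂₀ D' = ∅ →
      D ⊆ D' → D' = D

/-- The open sets of the one-point connectification `Y = X ∪ {p}`, modelled as
`Option X` with `p = none`: (I) sets not containing `none` whose trace on `X` is
open in `X`, and (II) sets containing `none` whose trace on `X` is open in `X`
and which contain (the image of) a member of `𝒟 C` for every connected
component `C` of `X`. -/
def OPOpens {X : Type*} [TopologicalSpace X] (𝒟 : Set X → Set (Set X)) :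
    Set (Set (Option X)) :=
  {U | (none ∉ U ∧ IsOpen (some ⁻¹' U)) ∨
       (none ∈ U ∧ IsOpen (some ⁻¹' U) ∧
         ∀ x : X, ∃ A ∈ 𝒟 (connectedComponent x), some '' A ⊆ U)}

/-- The topology that `Y = X ∪ {p}` induces on `X` coincides with the original
topology of `X`. -/
theorem stmt_9 {X : Type*} [tX : TopologicalSpace X] (𝒟 : Set X → Set (Set X))
    (hnc : ∀ x : X, ¬ IsCompact (connectedComponent x))
    (h𝒟 : ∀ x : X, IsMaxFIPFamily (connectedComponent x) (𝒟 (connectedComponent x)))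
    (tY : TopologicalSpace (Option X))
    (hopen : ∀ U : Set (Option X), @IsOpen _ tY U ↔ U ∈ OPOpens 𝒟) :
    TopologicalSpace.induced (some : X → Option X) tY = tX := by
  apply TopologicalSpace.ext
  funext s
  ext : 1
  rw [isOpen_induced_iff]
  constructor
  · rintro ⟨t, ht, rfl⟩
    rcases (hopen t).1 ht with ⟨-, h⟩ | ⟨-, h, -⟩ <;> exact h
  · intro hs
    refine ⟨some '' s, (hopen _).2 (Or.inl ⟨?_, ?_⟩), ?_⟩
    · rintro ⟨x, -, h⟩; exact Option.some_ne_none x h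
    all_goals rw [Set.preimage_image_eq _ (Option.some_injective X)]
    exact hs
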